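/- Let H be a real inner product space, L : H → H a symmetric linear operator, and φ ∈ H with ⟨φ,φ⟩ = λ > 0. Suppose ⟨Lu, u⟩ ≥ 0 for all u ⊥ φ, and ⟨Lφ, φ⟩ < 0. Then every h ∈ ker L satisfies ⟨h, φ⟩ = 0. -/

import Mathlib

open RealInnerProductSpace

/-- If a symmetric operator `L` on a real inner product space is
nonnegative on the orthogonal complement of `φ` (with `⟪φ,φ⟫ = λ > 0`) and
`⟪Lφ,φ⟫ < 0`, then every element of the kernel of `L` is orthogonal to `φ`. -/
theorem kernel_orthogonal_of_negative_direction
    {H : Type*} [NormedAddCommGroup H] [InnerProductSpace ℝ H]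
    (L : H →ₗ[ℝ] H) (hsym : ∀ u v : H, ⟪L u, v⟫ = ⟪u, L v⟫)
    (φ : H) (lam : ℝ) (hlam : 0 < lam) (hφ : ⟪φ, φ⟫ = lam)
    (hpos : ∀ u : H, ⟪u, φ⟫ = 0 → 0 ≤ ⟪L u, u⟫)
    (hneg : ⟪L φ, φ⟫ < 0) :
    ∀ h : H, L h = 0 → ⟪h, φ⟫ = 0 := by
  intro h hker
  set c : ℝ := ⟪h, φ⟫ / lam with hc
  set u : H := h - c • φ with hu
  have horth : ⟪u, φ⟫ = 0 := by
    rw [hu, inner_sub_left, real_inner_smul_left, hφ, hc]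
    field_simp
    ring
  have hLu : L u = (-c) • L φ := by
    rw [hu, map_sub, map_smul, hker, neg_smul]; abel
  have hLφh : ⟪L φ, h⟫ = 0 := by
    rw [hsym, hker, inner_zero_right]
  have hval : ⟪L u, u⟫ = c ^ 2 * ⟪L φ, φ⟫ := by
    rw [hLu, hu, inner_smul_left, inner_sub_right, real_inner_smul_right, hLφh]
    simp only [conj_trivial]
    ring
  have h0 := hpos u horth
  rw [hval] at h0
  have hc2 : c ^ 2 ≤ 0 := by
    nlinarith
  have : c = 0 := by nlinarith [sq_nonneg c]
  have := hc ▸ this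
  field_simp at this
  simpa using this
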